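/- Let X ⊆ ℝⁿ be open, H ∈ C¹(X,ℝ), let D̄H be a discrete gradient for H, let h > 0, and let Ē : X × X → ℝ^{n×n}, J̄, R̄ : X × X → ℝ^{n×n}, B̄ : X × X → ℝ^{n×m} be continuous with J̄ pointwise skew-symmetric and R̄ pointwise symmetric positive semi-definite. Suppose x^k, x^{k+1} ∈ X, f^k ∈ ℝⁿ, u^k ∈ ℝᵐ, y^k ∈ ℝᵐ satisfy Ē(x^k,x^{k+1})(x^{k+1} − x^k) = h (J̄(x^k,x^{k+1}) − R̄(x^k,x^{k+1})) f^k + h B̄(x^k,x^{k+1}) u^k, y^k = B̄(x^k,x^{k+1})ᵀ f^k, and Ē(x^k,x^{k+1})ᵀ f^k = D̄H(x^k,x^{k+1}). Then H(x^{k+1}) − H(x^k) = −h (f^k)ᵀ R̄(x^k,x^{k+1}) f^k + h (y^k)ᵀ u^k, and in particular H(x^{k+1}) − H(x^k) ≤ h (y^k)ᵀ u^k. -/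

import Mathlib

open Matrix Set

noncomputable def grad {n : ℕ} (f : (Fin n → ℝ) → ℝ) (x : Fin n → ℝ) : Fin n → ℝ :=
  fun i => fderiv ℝ f x (Pi.single i 1)

def IsDiscreteGradient {n : ℕ} (X : Set (Fin n → ℝ)) (f : (Fin n → ℝ) → ℝ)
    (Df : (Fin n → ℝ) → (Fin n → ℝ) → (Fin n → ℝ)) : Prop :=
  ContinuousOn (fun p : (Fin n → ℝ) × (Fin n → ℝ) => Df p.1 p.2) (X ×ˢ X) ∧
  (∀ x ∈ X, ∀ x' ∈ X, Df x x' ⬝ᵥ (x' - x) = f x' - f x) ∧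
  (∀ x ∈ X, Df x x = grad f x)

/-- discrete power balance and dissipation inequality for the
DDR-method. -/
theorem DDR_method_power_balance {n m : ℕ}
    (X : Set (Fin n → ℝ)) (hX : IsOpen X)
    (H : (Fin n → ℝ) → ℝ) (hH : ContDiffOn ℝ 1 H X)
    (DH : (Fin n → ℝ) → (Fin n → ℝ) → (Fin n → ℝ))
    (hDH : IsDiscreteGradient X H DH)
    (h : ℝ) (hh : 0 < h)
    (Ebar Jbar Rbar : (Fin n → ℝ) → (Fin n → ℝ) → Matrix (Fin n) (Fin n) ℝ)
    (Bbar : (Fin n → ℝ) → (Fin n → ℝ) → Matrix (Fin n) (Fin m) ℝ)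
    (hEcont : ContinuousOn (fun p : (Fin n → ℝ) × (Fin n → ℝ) => Ebar p.1 p.2) (X ×ˢ X))
    (hJcont : ContinuousOn (fun p : (Fin n → ℝ) × (Fin n → ℝ) => Jbar p.1 p.2) (X ×ˢ X))
    (hRcont : ContinuousOn (fun p : (Fin n → ℝ) × (Fin n → ℝ) => Rbar p.1 p.2) (X ×ˢ X))
    (hBcont : ContinuousOn (fun p : (Fin n → ℝ) × (Fin n → ℝ) => Bbar p.1 p.2) (X ×ˢ X))
    (hJskew : ∀ x ∈ X, ∀ x' ∈ X, (Jbar x x')ᵀ = -(Jbar x x'))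
    (hRpsd : ∀ x ∈ X, ∀ x' ∈ X, (Rbar x x').PosSemidef)
    (xk xk1 : Fin n → ℝ) (hxk : xk ∈ X) (hxk1 : xk1 ∈ X)
    (fk : Fin n → ℝ) (uk yk : Fin m → ℝ)
    (hstep : (Ebar xk xk1).mulVec (xk1 - xk)
      = h • ((Jbar xk xk1 - Rbar xk xk1).mulVec fk) + h • ((Bbar xk xk1).mulVec uk))
    (hout : yk = (Bbar xk xk1)ᵀ.mulVec fk)
    (hcostate : (Ebar xk xk1)ᵀ.mulVec fk = DH xk xk1) :
    H xk1 - H xk = -(h * (fk ⬝ᵥ (Rbar xk xk1).mulVec fk)) + h * (yk ⬝ᵥ uk)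
    ∧ H xk1 - H xk ≤ h * (yk ⬝ᵥ uk) := by
  obtain ⟨-, hDG, -⟩ := hDH
  have key : H xk1 - H xk = DH xk xk1 ⬝ᵥ (xk1 - xk) := (hDG xk hxk xk1 hxk1).symm
  have hfJ : fk ⬝ᵥ (Jbar xk xk1).mulVec fk = 0 := by
    have h1 : fk ⬝ᵥ (Jbar xk xk1).mulVec fk = (Jbar xk xk1)ᵀ.mulVec fk ⬝ᵥ fk := by
      rw [Matrix.dotProduct_mulVec, ← Matrix.mulVec_transpose, dotProduct_comm]
    rw [hJskew xk hxk xk1 hxk1, Matrix.neg_mulVec, neg_dotProduct] at h1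
    have h2 : (Jbar xk xk1).mulVec fk ⬝ᵥ fk = fk ⬝ᵥ (Jbar xk xk1).mulVec fk :=
      dotProduct_comm _ _
    rw [h2] at h1
    linarith
  have main : H xk1 - H xk = -(h * (fk ⬝ᵥ (Rbar xk xk1).mulVec fk)) + h * (yk ⬝ᵥ uk) := by
    rw [key, ← hcostate]
    have hE : (Ebar xk xk1)ᵀ.mulVec fk ⬝ᵥ (xk1 - xk)
        = fk ⬝ᵥ (Ebar xk xk1).mulVec (xk1 - xk) := by
      rw [Matrix.mulVec_transpose, ← Matrix.dotProduct_mulVec]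
    rw [hE, hstep, dotProduct_add, dotProduct_smul,
      dotProduct_smul, Matrix.sub_mulVec, dotProduct_sub, hfJ, hout]
    have hBu : (Bbar xk xk1)ᵀ.mulVec fk ⬝ᵥ uk = fk ⬝ᵥ (Bbar xk xk1).mulVec uk := by
      rw [Matrix.mulVec_transpose, ← Matrix.dotProduct_mulVec]
    rw [hBu]
    simp [smul_eq_mul]
  refine ⟨main, ?_⟩
  have hR := (hRpsd xk hxk xk1 hxk1).dotProduct_mulVec_nonneg fk
  simp only [star_trivial] at hR
  nlinarith [hR]
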